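/- Let X ⊆ {0,1}^m and Y ⊆ {0,1}^n be nonempty, and for binary strings u ∈ {0,1}^m, v ∈ {0,1}^n let uv ∈ {0,1}^{m+n} denote concatenation. Then the downward closure of {xy : x ∈ X, y ∈ Y} in {0,1}^{m+n} equals {uv : u in the downward closure of X, v in the downward closure of Y}; consequently the daisy cube Q_{m+n}({xy : x ∈ X, y ∈ Y}) is isomorphic to the Cartesian product of the daisy cubes Q_m(X) and Q_n(Y). -/

import Mathlib

/-- The hypercube Q_n: vertices are binary strings of length n,
two vertices are adjacent iff they differ in exactly one position. -/
def Qcube (n : ℕ) : SimpleGraph (Fin n → Bool) where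
  Adj u v := hammingDist u v = 1
  symm := by
    constructor
    intro u v h
    rwa [hammingDist_comm]
  loopless := by
    constructor
    intro u h
    simp [hammingDist_self] at h

lemma hammingDist_append {m n : ℕ} (u u' : Fin m → Bool) (v v' : Fin n → Bool) :
    hammingDist (Fin.append u v) (Fin.append u' v') = hammingDist u u' + hammingDist v v' := by
  simp only [hammingDist, Finset.card_filter]
  rw [Fin.sum_univ_add]
  simp [Fin.append_left, Fin.append_right]

lemma append_le_append_iff {m n : ℕ} {u x : Fin m → Bool} {v y : Fin n → Bool} :
    Fin.append u v ≤ Fin.append x y ↔ u ≤ x ∧ v ≤ y := by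
  constructor
  · intro h
    constructor
    · intro i
      have := h (Fin.castAdd n i)
      simpa [Fin.append_left] using this
    · intro i
      have := h (Fin.natAdd m i)
      simpa [Fin.append_right] using this
  · rintro ⟨h1, h2⟩ i
    refine Fin.addCases (fun j => ?_) (fun j => ?_) i
    · simpa [Fin.append_left] using h1 j
    · simpa [Fin.append_right] using h2 j

/-- The downward closure of the set of concatenations {xy : x ∈ X, y ∈ Y}
equals the set of concatenations of elements of the downward closures of X and Y;
consequently the daisy cube Q_{m+n}({xy}) is isomorphic to the Cartesian (box)
product of the daisy cubes Q_m(X) and Q_n(Y). -/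
theorem stmt12 (m n : ℕ) (X : Set (Fin m → Bool)) (Y : Set (Fin n → Bool))
    (hX : X.Nonempty) (hY : Y.Nonempty)
    (DX : Set (Fin m → Bool)) (hDX : DX = {u | ∃ x ∈ X, u ≤ x})
    (DY : Set (Fin n → Bool)) (hDY : DY = {u | ∃ y ∈ Y, u ≤ y})
    (Z : Set (Fin (m + n) → Bool))
    (hZ : Z = {w | ∃ x ∈ X, ∃ y ∈ Y, w = Fin.append x y})
    (DZ : Set (Fin (m + n) → Bool)) (hDZ : DZ = {w | ∃ z ∈ Z, w ≤ z}) :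
    DZ = {w | ∃ u ∈ DX, ∃ v ∈ DY, w = Fin.append u v} ∧
    Nonempty (((Qcube (m + n)).induce DZ) ≃g
      (((Qcube m).induce DX).boxProd ((Qcube n).induce DY))) := by
  subst hDX hDY hZ hDZ
  -- the key membership characterizations
  have hmem1 : ∀ w : Fin (m + n) → Bool,
      (∃ z ∈ {w | ∃ x ∈ X, ∃ y ∈ Y, w = Fin.append x y}, w ≤ z) →
      ((fun i => w (Fin.castAdd n i)) ∈ {u | ∃ x ∈ X, u ≤ x} ∧
       (fun i => w (Fin.natAdd m i)) ∈ {u | ∃ y ∈ Y, u ≤ y}) := by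
    rintro w ⟨z, ⟨x, hx, y, hy, rfl⟩, hwz⟩
    rw [← Fin.append_castAdd_natAdd (f := w)] at hwz
    rw [append_le_append_iff] at hwz
    exact ⟨⟨x, hx, hwz.1⟩, ⟨y, hy, hwz.2⟩⟩
  have hmem2 : ∀ (u : Fin m → Bool) (v : Fin n → Bool),
      u ∈ {u | ∃ x ∈ X, u ≤ x} → v ∈ {u | ∃ y ∈ Y, u ≤ y} →
      (∃ z ∈ {w | ∃ x ∈ X, ∃ y ∈ Y, w = Fin.append x y}, Fin.append u v ≤ z) := by
    rintro u v ⟨x, hx, hux⟩ ⟨y, hy, hvy⟩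
    exact ⟨Fin.append x y, ⟨x, hx, y, hy, rfl⟩, append_le_append_iff.mpr ⟨hux, hvy⟩⟩
  have hset : {w | ∃ z ∈ {w | ∃ x ∈ X, ∃ y ∈ Y, w = Fin.append x y}, w ≤ z} =
      {w | ∃ u ∈ {u | ∃ x ∈ X, u ≤ x}, ∃ v ∈ {u | ∃ y ∈ Y, u ≤ y}, w = Fin.append u v} := by
    ext w
    constructor
    · intro hw
      obtain ⟨h1, h2⟩ := hmem1 w hw
      exact ⟨_, h1, _, h2, (Fin.append_castAdd_natAdd (f := w)).symm⟩
    · rintro ⟨u, hu, v, hv, rfl⟩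
      exact hmem2 u v hu hv
  refine ⟨hset, ⟨?_⟩⟩
  -- build the isomorphism
  refine
    { toFun := fun w =>
        (⟨fun i => w.1 (Fin.castAdd n i), (hmem1 w.1 w.2).1⟩,
         ⟨fun i => w.1 (Fin.natAdd m i), (hmem1 w.1 w.2).2⟩)
      invFun := fun p => ⟨Fin.append p.1.1 p.2.1, hmem2 p.1.1 p.2.1 p.1.2 p.2.2⟩
      left_inv := ?_
      right_inv := ?_
      map_rel_iff' := ?_ }
  · rintro ⟨w, hw⟩
    simp [Fin.append_castAdd_natAdd]
  · rintro ⟨⟨u, hu⟩, ⟨v, hv⟩⟩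
    simp [Fin.append_left, Fin.append_right]
  · rintro ⟨w, hw⟩ ⟨w', hw'⟩
    simp only [SimpleGraph.boxProd_adj, SimpleGraph.comap_adj, Function.Embedding.coe_subtype,
      Equiv.coe_fn_mk, Qcube]
    constructor
    · rintro (⟨h1, h2⟩ | ⟨h1, h2⟩)
      · have h2' : (fun i => w (Fin.natAdd m i)) = fun i => w' (Fin.natAdd m i) :=
          congrArg Subtype.val h2
        rw [← Fin.append_castAdd_natAdd (f := w), ← Fin.append_castAdd_natAdd (f := w'),
          hammingDist_append, h2', hammingDist_self]
        simpa using h1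
      · have h2' : (fun i => w (Fin.castAdd n i)) = fun i => w' (Fin.castAdd n i) :=
          congrArg Subtype.val h2
        rw [← Fin.append_castAdd_natAdd (f := w), ← Fin.append_castAdd_natAdd (f := w'),
          hammingDist_append, h2', hammingDist_self]
        simpa using h1
    · intro h
      rw [← Fin.append_castAdd_natAdd (f := w), ← Fin.append_castAdd_natAdd (f := w'),
        hammingDist_append] at h
      rcases Nat.add_eq_one_iff.mp h with ⟨ha, hb⟩ | ⟨ha, hb⟩
      · exact Or.inr ⟨hb, Subtype.ext (eq_of_hammingDist_eq_zero ha)⟩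
      · exact Or.inl ⟨ha, Subtype.ext (eq_of_hammingDist_eq_zero hb)⟩
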